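/- Let X ⊆ ℝ^d be 1-dense, c ∈ ℝ^d, y ∈ ℝ^d a point at distance at most 1 from conv(X ∩ B(c, 1)), and suppose x_1, …, x_k ∈ X ∩ B(c, 1) are points whose convex hull's 1-neighborhood contains y. Then there exists an index i such that ‖y − x_i‖ ≤ √2. (This is the key covering step applied to 1-dense sets: any point within distance 1 of the convex hull of finitely many points of X lying in a common unit ball is within √2 of one of those points.) -/

import Mathlib

/-- A set `X ⊆ ℝ^d` is 1-dense if every point of `ℝ^d` is at distance `< 1` from `X`. -/
def IsOneDense {d : ℕ} (X : Set (EuclideanSpace ℝ (Fin d))) : Prop :=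
  ∀ y : EuclideanSpace ℝ (Fin d), ∃ x ∈ X, ‖y - x‖ < 1

theorem stmt16 (d k : ℕ) (hk : 0 < k)
    (X : Set (EuclideanSpace ℝ (Fin d))) (hX : IsOneDense X)
    (c y : EuclideanSpace ℝ (Fin d))
    (hy : Metric.infDist y (convexHull ℝ (X ∩ Metric.closedBall c 1)) ≤ 1)
    (x : Fin k → EuclideanSpace ℝ (Fin d))
    (hx : ∀ i, x i ∈ X ∩ Metric.closedBall c 1)
    (hyx : Metric.infDist y (convexHull ℝ (Set.range x)) ≤ 1) :
    ∃ i, ‖y - x i‖ ≤ Real.sqrt 2 := by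
  classical
  -- the convex hull is compact and nonempty, so the inf distance is attained at some p
  have hcomp : IsCompact (convexHull ℝ (Set.range x)) :=
    (Set.finite_range x).isCompact_convexHull (𝕜 := ℝ)
  have hne : (convexHull ℝ (Set.range x)).Nonempty :=
    ⟨x ⟨0, hk⟩, subset_convexHull ℝ _ ⟨⟨0, hk⟩, rfl⟩⟩
  obtain ⟨p, hpmem, hpd⟩ := hcomp.exists_infDist_eq_dist hne y
  have hyp1 : ‖y - p‖ ≤ 1 := by
    rw [← dist_eq_norm, ← hpd]; exact hyx
  -- write p as a convex combination of the x i
  rw [convexHull_range_eq_exists_affineCombination] at hpmem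
  obtain ⟨s, w, hw0, hw1, hws⟩ := hpmem
  rw [Finset.affineCombination_eq_linear_combination s x w hw1] at hws
  set W : Fin k → ℝ := fun i => if i ∈ s then w i else 0 with hWdef
  have hW0 : ∀ i, 0 ≤ W i := by
    intro i; simp only [hWdef]
    split
    · exact hw0 i ‹_›
    · exact le_refl 0
  have hW1 : ∑ i, W i = 1 := by
    rw [← hw1]
    rw [Finset.sum_ite_mem, Finset.univ_inter]
  have hWp : ∑ i, W i • x i = p := by
    rw [← hws]
    simp only [hWdef, ite_smul, zero_smul]
    rw [Finset.sum_ite_mem, Finset.univ_inter]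
  -- inner product facts
  have hyp : (inner ℝ y p : ℝ) = ∑ i, W i * (inner ℝ y (x i) : ℝ) := by
    rw [← hWp, inner_sum]
    exact Finset.sum_congr rfl fun i _ => real_inner_smul_right _ _ _
  have hpc : (inner ℝ p c : ℝ) = ∑ i, W i * (inner ℝ (x i) c : ℝ) := by
    rw [← hWp, sum_inner]
    exact Finset.sum_congr rfl fun i _ => real_inner_smul_left _ _ _
  -- the variance identity
  have hL : ∑ i, W i * ‖y - x i‖ ^ 2
      = ‖y‖ ^ 2 - 2 * (inner ℝ y p : ℝ) + ∑ i, W i * ‖x i‖ ^ 2 := by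
    have h1 : ∀ i ∈ Finset.univ, W i * ‖y - x i‖ ^ 2
        = W i * ‖y‖ ^ 2 - 2 * (W i * (inner ℝ y (x i) : ℝ)) + W i * ‖x i‖ ^ 2 := by
      intro i _; rw [norm_sub_sq_real]; ring
    rw [Finset.sum_congr rfl h1, Finset.sum_add_distrib, Finset.sum_sub_distrib,
      ← Finset.sum_mul, ← Finset.mul_sum, hW1, one_mul, hyp]
  have hR : ∑ i, W i * ‖x i - c‖ ^ 2
      = ∑ i, W i * ‖x i‖ ^ 2 - 2 * (inner ℝ p c : ℝ) + ‖c‖ ^ 2 := by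
    have h1 : ∀ i ∈ Finset.univ, W i * ‖x i - c‖ ^ 2
        = W i * ‖x i‖ ^ 2 - 2 * (W i * (inner ℝ (x i) c : ℝ)) + W i * ‖c‖ ^ 2 := by
      intro i _; rw [norm_sub_sq_real]; ring
    rw [Finset.sum_congr rfl h1, Finset.sum_add_distrib, Finset.sum_sub_distrib,
      ← Finset.mul_sum, ← Finset.sum_mul, hW1, one_mul, hpc]
  have key : ∑ i, W i * ‖y - x i‖ ^ 2
      = ‖y - p‖ ^ 2 + (∑ i, W i * ‖x i - c‖ ^ 2) - ‖p - c‖ ^ 2 := by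
    rw [hL, hR, norm_sub_sq_real, norm_sub_sq_real]; ring
  -- bounds
  have hxc : ∀ i, ‖x i - c‖ ≤ 1 := by
    intro i
    have := (hx i).2
    rwa [Metric.mem_closedBall, dist_eq_norm] at this
  have hsum2 : ∑ i, W i * ‖x i - c‖ ^ 2 ≤ 1 := by
    calc ∑ i, W i * ‖x i - c‖ ^ 2 ≤ ∑ i, W i * 1 := by
          refine Finset.sum_le_sum fun i _ => ?_
          refine mul_le_mul_of_nonneg_left ?_ (hW0 i)
          calc ‖x i - c‖ ^ 2 ≤ 1 ^ 2 :=
                pow_le_pow_left₀ (norm_nonneg _) (hxc i) 2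
            _ = 1 := one_pow 2
      _ = 1 := by simp only [mul_one]; exact hW1
  have hbound : ∑ i, W i * ‖y - x i‖ ^ 2 ≤ 2 := by
    rw [key]
    have h1 : ‖y - p‖ ^ 2 ≤ 1 := by
      calc ‖y - p‖ ^ 2 ≤ 1 ^ 2 := pow_le_pow_left₀ (norm_nonneg _) hyp1 2
        _ = 1 := one_pow 2
    nlinarith [sq_nonneg ‖p - c‖]
  -- conclude by contradiction
  by_contra hcon
  push_neg at hcon
  have h2lt : ∀ i, 2 < ‖y - x i‖ ^ 2 := fun i => Real.lt_sq_of_sqrt_lt (hcon i)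
  obtain ⟨j, hj⟩ : ∃ j, 0 < W j := by
    by_contra h
    push_neg at h
    have : ∑ i, W i = 0 := Finset.sum_eq_zero fun i _ => le_antisymm (h i) (hW0 i)
    rw [hW1] at this; norm_num at this
  have : (2 : ℝ) < ∑ i, W i * ‖y - x i‖ ^ 2 := by
    calc (2 : ℝ) = ∑ i, W i * 2 := by rw [← Finset.sum_mul, hW1, one_mul]
      _ < ∑ i, W i * ‖y - x i‖ ^ 2 := by
          refine Finset.sum_lt_sum (fun i _ => ?_) ⟨j, Finset.mem_univ j, ?_⟩
          · exact mul_le_mul_of_nonneg_left (h2lt i).le (hW0 i)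
          · exact (mul_lt_mul_iff_right₀ hj).2 (h2lt j)
  linarith
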